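/- For a nonnegative matrix V ∈ ℝ_+^{F×N} with no zero column, the optimal value of the rank-one nonnegative over-approximation problem min { Σ_{f,n} w_f h_n : w_f h_n ≥ V_{fn} for all f,n, w ≥ 0, h ≥ 0 } equals the optimal value of the convex problem min { Σ_n max_f (u_f V_{fn}) : u > 0, Σ_f 1/u_f ≤ 1 }. -/

import Mathlib

/-- The optimal value of the rank-one nonnegative over-approximation problem equals the
optimal value of its convex reformulation. -/
theorem rank_one_nmo_eq_convex_reformulation
    {F N : ℕ} (hF : 0 < F) (V : Matrix (Fin F) (Fin N) ℝ)
    (hV : ∀ f n, 0 ≤ V f n) (hcol : ∀ n, ∃ f, 0 < V f n) :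
    sInf {c : ℝ | ∃ (w : Fin F → ℝ) (h : Fin N → ℝ),
        (∀ f, 0 ≤ w f) ∧ (∀ n, 0 ≤ h n) ∧ (∀ f n, V f n ≤ w f * h n) ∧
        c = ∑ f, ∑ n, w f * h n} =
      sInf {c : ℝ | ∃ u : Fin F → ℝ,
        (∀ f, 0 < u f) ∧ (∑ f, (u f)⁻¹) ≤ 1 ∧
        c = ∑ n, ⨆ f, u f * V f n} := by
  haveI : Nonempty (Fin F) := ⟨⟨0, hF⟩⟩
  set A := {c : ℝ | ∃ (w : Fin F → ℝ) (h : Fin N → ℝ),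
      (∀ f, 0 ≤ w f) ∧ (∀ n, 0 ≤ h n) ∧ (∀ f n, V f n ≤ w f * h n) ∧
      c = ∑ f, ∑ n, w f * h n} with hA
  set B := {c : ℝ | ∃ u : Fin F → ℝ,
      (∀ f, 0 < u f) ∧ (∑ f, (u f)⁻¹) ≤ 1 ∧
      c = ∑ n, ⨆ f, u f * V f n} with hB
  -- B is nonempty
  have hBne : B.Nonempty := by
    refine ⟨∑ n, ⨆ f, (F : ℝ) * V f n, fun _ => (F : ℝ), fun f => ?_, ?_, rfl⟩
    · simpa using (Nat.cast_pos.mpr hF : (0:ℝ) < F)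
    · rw [Finset.sum_const, Finset.card_univ, Fintype.card_fin, nsmul_eq_mul,
        mul_inv_cancel₀ (by exact_mod_cast hF.ne' : (F : ℝ) ≠ 0)]
  -- key map B → A
  have hBA : ∀ c ∈ B, ∃ c' ∈ A, c' ≤ c := by
    rintro c ⟨u, hu, husum, rfl⟩
    set h : Fin N → ℝ := fun n => ⨆ f, u f * V f n with hdef
    have hh : ∀ n, 0 ≤ h n := by
      intro n
      have := le_ciSup (Finite.bddAbove_range fun f => u f * V f n) (⟨0, hF⟩ : Fin F)
      exact le_trans (mul_nonneg (hu _).le (hV _ _)) this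
    refine ⟨∑ f, ∑ n, (u f)⁻¹ * h n, ⟨fun f => (u f)⁻¹, h,
      fun f => (inv_nonneg.mpr (hu f).le), hh, fun f n => ?_, rfl⟩, ?_⟩
    · have h1 : u f * V f n ≤ h n :=
        le_ciSup (Finite.bddAbove_range fun f => u f * V f n) f
      have := mul_le_mul_of_nonneg_left h1 (inv_nonneg.mpr (hu f).le)
      rwa [← mul_assoc, inv_mul_cancel₀ (hu f).ne', one_mul] at this
    · have hsum : ∑ f, ∑ n, (u f)⁻¹ * h n = (∑ f, (u f)⁻¹) * ∑ n, h n := by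
        rw [Finset.sum_mul]
        exact Finset.sum_congr rfl fun f _ => by rw [Finset.mul_sum]
      rw [hsum]
      have hhs : 0 ≤ ∑ n, h n := Finset.sum_nonneg fun n _ => hh n
      calc (∑ f, (u f)⁻¹) * ∑ n, h n ≤ 1 * ∑ n, h n :=
            mul_le_mul_of_nonneg_right husum hhs
        _ = ∑ n, h n := one_mul _
  have hAne : A.Nonempty := by
    obtain ⟨c, hc⟩ := hBne
    obtain ⟨c', hc', _⟩ := hBA c hc
    exact ⟨c', hc'⟩
  have hAbdd : BddBelow A := by
    refine ⟨0, ?_⟩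
    rintro c ⟨w, h, hw, hh, _, rfl⟩
    exact Finset.sum_nonneg fun f _ => Finset.sum_nonneg fun n _ =>
      mul_nonneg (hw f) (hh n)
  have hBbdd : BddBelow B := by
    refine ⟨0, ?_⟩
    rintro c ⟨u, hu, _, rfl⟩
    refine Finset.sum_nonneg fun n _ => ?_
    have := le_ciSup (Finite.bddAbove_range fun f => u f * V f n) (⟨0, hF⟩ : Fin F)
    exact le_trans (mul_nonneg (hu _).le (hV _ _)) this
  apply le_antisymm
  · refine le_csInf hBne fun c hc => ?_
    obtain ⟨c', hc', hle⟩ := hBA c hc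
    exact le_trans (csInf_le hAbdd hc') hle
  · refine le_csInf hAne ?_
    rintro c ⟨w, h, hw, hh, hineq, rfl⟩
    refine le_of_forall_pos_le_add ?_
    intro ε hε
    set H : ℝ := ∑ n, h n with hH
    have hH0 : 0 ≤ H := Finset.sum_nonneg fun n _ => hh n
    set δ : ℝ := ε / ((F : ℝ) * H + 1) with hδdef
    have hden : 0 < (F : ℝ) * H + 1 := by positivity
    have hδ : 0 < δ := div_pos hε hden
    set w' : Fin F → ℝ := fun f => w f + δ with hw'def
    have hw' : ∀ f, 0 < w' f := fun f => add_pos_of_nonneg_of_pos (hw f) hδ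
    set S : ℝ := ∑ f, w' f with hS
    have hS0 : 0 < S := Finset.sum_pos (fun f _ => hw' f) Finset.univ_nonempty
    set u : Fin F → ℝ := fun f => S * (w' f)⁻¹ with hu
    have hupos : ∀ f, 0 < u f := fun f => mul_pos hS0 (inv_pos.mpr (hw' f))
    have huinv : ∀ f, (u f)⁻¹ = w' f / S := by
      intro f
      rw [hu]
      field_simp
    have husum : (∑ f, (u f)⁻¹) ≤ 1 := by
      have : ∑ f, (u f)⁻¹ = (∑ f, w' f) / S := by
        rw [Finset.sum_div]
        exact Finset.sum_congr rfl fun f _ => huinv f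
      rw [this, ← hS, div_self hS0.ne']
    refine le_trans (csInf_le hBbdd ⟨u, hupos, husum, rfl⟩) ?_
    -- bound ∑ n, ⨆ f, u f * V f n ≤ S * H
    have hbnd : ∀ n, (⨆ f, u f * V f n) ≤ S * h n := by
      intro n
      refine ciSup_le fun f => ?_
      calc u f * V f n ≤ u f * (w' f * h n) := by
            refine mul_le_mul_of_nonneg_left ?_ (hupos f).le
            calc V f n ≤ w f * h n := hineq f n
              _ ≤ w' f * h n := by
                  refine mul_le_mul_of_nonneg_right ?_ (hh n)
                  simp [hw'def, hδ.le]
        _ = (u f * w' f) * h n := by ring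
        _ = S * h n := by
            have : u f * w' f = S := by
              rw [hu]; field_simp; rw [div_self (hw' f).ne']
            rw [this]
    have hcost : ∑ f, ∑ n, w f * h n = (∑ f, w f) * H := by
      rw [Finset.sum_mul]
      exact Finset.sum_congr rfl fun f _ => by rw [Finset.mul_sum]
    calc ∑ n, ⨆ f, u f * V f n ≤ ∑ n, S * h n :=
          Finset.sum_le_sum fun n _ => hbnd n
      _ = S * H := by rw [Finset.mul_sum]
      _ = (∑ f, w f) * H + (F : ℝ) * δ * H := by
          rw [hS]
          simp only [hw'def]
          rw [Finset.sum_add_distrib, Finset.sum_const, Finset.card_univ,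
            Fintype.card_fin, nsmul_eq_mul]
          ring
      _ ≤ (∑ f, ∑ n, w f * h n) + ε := by
          rw [hcost]
          have : (F : ℝ) * δ * H ≤ ε := by
            rw [hδdef]
            rw [div_eq_mul_inv]
            have key : (F : ℝ) * H ≤ (F : ℝ) * H + 1 := by linarith
            calc (F : ℝ) * (ε * ((F : ℝ) * H + 1)⁻¹) * H
                = ε * (((F : ℝ) * H) / ((F : ℝ) * H + 1)) := by ring
              _ ≤ ε * 1 := by
                  refine mul_le_mul_of_nonneg_left ?_ hε.le
                  exact div_le_one_of_le₀ key hden.le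
              _ = ε := mul_one ε
          linarith
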